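/- Let P be a finite graded poset of rank r, and let v ∈ P with rk(v) = i. Then, as maps on positive labelings of P (with ρτ_{-1} interpreted as the identity): (1) T_v* = ρτ_{i-1} ∘ τ_v ∘ ρτ_{i-1}; (2) ρT_i* = ρτ_{i-1} ∘ ρτ_i ∘ ρτ_{i-1}; (3) τ_v* = ρT_0 ∘ ρT_1 ∘ ⋯ ∘ ρT_{i-1} ∘ T_v ∘ ρT_{i-1} ∘ ⋯ ∘ ρT_1 ∘ ρT_0; (4) ρτ_i* = ρT_0 ∘ ρT_1 ∘ ⋯ ∘ ρT_{i-1} ∘ ρT_i ∘ ρT_{i-1} ∘ ⋯ ∘ ρT_1 ∘ ρT_0. -/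

import Mathlib

/-!
Birational (commutative) antichain/order rowmotion on a finite poset `P`, with labels in `ℝ`
and positive labelings, following Joseph–Roby, "Birational and noncommutative lifts of
antichain toggling and rowmotion".
-/

open Finset

attribute [local instance] Classical.propDecidable

variable {P : Type*} [Fintype P] [PartialOrder P]

/-- `c` is a saturated chain in `P`: consecutive entries are covers. -/
def SatChain {P : Type*} [PartialOrder P] {k : ℕ} (c : Fin (k + 1) → P) : Prop :=
  ∀ i : Fin k, c i.castSucc ⋖ c i.succ

/-- `c` is a maximal chain of `P`: a saturated chain from a minimal element to a maximal
element of `P` (equivalently, the restriction to `P` of a maximal chain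
`0̂ ⋖ y₁ ⋖ ⋯ ⋖ y_k ⋖ 1̂` of `P̂`). -/
def MaxChain {P : Type*} [PartialOrder P] {k : ℕ} (c : Fin (k + 1) → P) : Prop :=
  SatChain c ∧ IsMin (c 0) ∧ IsMax (c (Fin.last k))

/-- `Υ_v(g)`: the sum over all maximal chains `(y₁, …, y_k)` of `P` through `v` of the
products `g(y₁)⋯g(y_k)` of the labels along the chain. -/
noncomputable def Upsilon (g : P → ℝ) (v : P) : ℝ :=
  ∑ k ∈ range (Fintype.card P),
    ∑ c ∈ univ.filter (fun c : Fin (k + 1) → P => MaxChain c ∧ ∃ j, c j = v),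
      (List.ofFn (g ∘ c)).prod

/-- The birational antichain toggle `τ_v`: it replaces the label at `v` by `C / Υ_v(g)` and
fixes all other labels. -/
noncomputable def atog (C : ℝ) (v : P) (g : P → ℝ) : P → ℝ :=
  fun x => if x = v then C / Upsilon g v else g x

/-- `∑_{y ∈ P̂, y ⋖ x} f(y)`, with the convention `f(0̂) = 1` (the unique lower cover in
`P̂` of a minimal element of `P` is `0̂`). -/
noncomputable def lowSum (f : P → ℝ) (x : P) : ℝ :=
  (if IsMin x then 1 else 0) + ∑ y ∈ univ.filter (fun y => y ⋖ x), f y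

/-- `∑_{y ∈ P̂, y ⋗ x} 1/f(y)`, with the convention `f(1̂) = C`. -/
noncomputable def upInvSum (C : ℝ) (f : P → ℝ) (x : P) : ℝ :=
  (if IsMax x then 1 / C else 0) + ∑ y ∈ univ.filter (fun y => x ⋖ y), 1 / f y

/-- The birational order toggle `T_v`: it replaces the label at `v` by
`(∑_{y ∈ P̂, y ⋖ v} f(y)) / (f(v) · ∑_{y ∈ P̂, y ⋗ v} 1/f(y))` (with `f(0̂) = 1`,
`f(1̂) = C`) and fixes all other labels. -/
noncomputable def otog (C : ℝ) (v : P) (f : P → ℝ) : P → ℝ :=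
  fun x => if x = v then lowSum f v / (f v * upInvSum C f v) else f x

/-- The birational complement map `Θ`: `(Θf)(x) = C / f(x)`. -/
noncomputable def thetaMap (C : ℝ) (f : P → ℝ) : P → ℝ := fun x => C / f x

/-- The birational down transfer `∇`: `(∇f)(x) = f(x) / ∑_{y ∈ P̂, y ⋖ x} f(y)` with
`f(0̂) = 1`. -/
noncomputable def nablaMap (f : P → ℝ) : P → ℝ := fun x => f x / lowSum f x

/-- The birational inverse up transfer `Δ⁻¹`: `(Δ⁻¹f)(x)` is the sum, over all saturated
chains `x = y₁ ⋖ y₂ ⋖ ⋯ ⋖ y_k ⋖ 1̂` in `P̂` (i.e. saturated chains of `P` starting at `x`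
and ending at a maximal element of `P`), of `f(y₁)f(y₂)⋯f(y_k)`. -/
noncomputable def deltaInvMap (f : P → ℝ) : P → ℝ := fun x =>
  ∑ k ∈ range (Fintype.card P),
    ∑ c ∈ univ.filter (fun c : Fin (k + 1) → P =>
        SatChain c ∧ c 0 = x ∧ IsMax (c (Fin.last k))),
      (List.ofFn (f ∘ c)).prod

/-- `l` is a linear extension of `P`: it lists every element of `P` exactly once, and
`l[i] < l[j]` in `P` implies `i < j`. -/
def IsLinearExtension {P : Type*} [PartialOrder P] (l : List P) : Prop :=
  l.Nodup ∧ (∀ x : P, x ∈ l) ∧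
    ∀ (i j : ℕ) (hi : i < l.length) (hj : j < l.length), l[i]'hi < l[j]'hj → i < j

/-- `l` is a linear extension of the subposet `A` of `P`. -/
def IsLinearExtensionOn {P : Type*} [PartialOrder P] (A : Set P) (l : List P) : Prop :=
  l.Nodup ∧ (∀ x : P, x ∈ l ↔ x ∈ A) ∧
    ∀ (i j : ℕ) (hi : i < l.length) (hj : j < l.length), l[i]'hi < l[j]'hj → i < j

/-- Apply the antichain toggles `τ` along the list `l`, first element of `l` first; for a
linear extension `l = (x₁,…,xₙ)` this is `τ_{xₙ} ∘ ⋯ ∘ τ_{x₂} ∘ τ_{x₁}`, i.e. birational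
antichain rowmotion `BAR`. -/
noncomputable def applyATogs (C : ℝ) (l : List P) (g : P → ℝ) : P → ℝ :=
  l.foldl (fun h v => atog C v h) g

/-- Apply the order toggles `T` along the list `l`, first element of `l` first. -/
noncomputable def applyOTogs (C : ℝ) (l : List P) (f : P → ℝ) : P → ℝ :=
  l.foldl (fun h v => otog C v h) f

/-- `rk` is a rank function exhibiting `P` as a graded poset of rank `r`: minimal elements
have rank `0`, ranks increase by `1` along covers, and maximal elements have rank `r`. -/
def IsRankFunction {P : Type*} [PartialOrder P] (rk : P → ℕ) (r : ℕ) : Prop :=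
  (∀ x : P, IsMin x → rk x = 0) ∧ (∀ x y : P, x ⋖ y → rk y = rk x + 1) ∧
    (∀ x : P, IsMax x → rk x = r)

/-- `T_v*`: the conjugate `τ_{v₁}⋯τ_{v_k} ∘ τ_v ∘ τ_{v_k}⋯τ_{v₁}` of `τ_v` by the
antichain toggles at the elements `v₁,…,v_k` covered by `v` (given as the list `lc`),
applied to `g`. -/
noncomputable def TstarApp (C : ℝ) (v : P) (lc : List P) (g : P → ℝ) : P → ℝ :=
  applyATogs C lc.reverse (atog C v (applyATogs C lc g))

/-- `τ_v* = η_v ∘ T_v ∘ η_v⁻¹` applied to `f`, where `le = (x₁,…,x_k)` is a linear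
extension of `{x : x < v}`, `η_v = T_{x₁} ∘ ⋯ ∘ T_{x_k}` and `η_v⁻¹ = T_{x_k} ∘ ⋯ ∘ T_{x₁}`. -/
noncomputable def tauStarApp (C : ℝ) (v : P) (le : List P) (f : P → ℝ) : P → ℝ :=
  le.foldr (fun w h => otog C w h) (otog C v (applyOTogs C le f))

section PosetFacts

set_option linter.unusedSectionVars false

variable {P : Type*} [Fintype P] [PartialOrder P]

lemma exists_covby_of_not_isMin {x : P} (h : ¬ IsMin x) : ∃ y, y ⋖ x := by
  rw [not_isMin_iff] at h
  obtain ⟨y, hy⟩ := h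
  obtain ⟨m, hm, hmax⟩ := (univ.filter (fun z => z < x)).exists_maximal ⟨y, by simp [hy]⟩
  simp only [mem_filter, mem_univ, true_and] at hm hmax
  exact ⟨m, hm, fun u hmu hux => lt_irrefl _ (hmu.trans_le (hmax hux hmu.le))⟩

lemma exists_covby_of_not_isMax {x : P} (h : ¬ IsMax x) : ∃ y, x ⋖ y := by
  rw [not_isMax_iff] at h
  obtain ⟨y, hy⟩ := h
  obtain ⟨m, hm, hmin⟩ := (univ.filter (fun z => x < z)).exists_minimal ⟨y, by simp [hy]⟩
  simp only [mem_filter, mem_univ, true_and] at hm hmin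
  exact ⟨m, hm, fun u hxu hum => lt_irrefl _ (hum.trans_le (hmin hxu hum.le))⟩

lemma exists_le_covby {x y : P} (h : x < y) : ∃ z, x ≤ z ∧ z ⋖ y := by
  obtain ⟨m, hm, hmax⟩ := (univ.filter (fun z => x ≤ z ∧ z < y)).exists_maximal
    ⟨x, by simp [h]⟩
  simp only [mem_filter, mem_univ, true_and] at hm hmax
  exact ⟨m, hm.1, hm.2, fun u hmu huy => lt_irrefl _ (hmu.trans_le (hmax ⟨hm.1.trans hmu.le, huy⟩ hmu.le))⟩

lemma rk_lt_of_lt {rk : P → ℕ} {r : ℕ} (hrk : IsRankFunction rk r) {x y : P} (h : x < y) :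
    rk x < rk y := by
  have wf : WellFounded ((· < ·) : P → P → Prop) := Finite.wellFounded_of_trans_of_irrefl _
  have main : ∀ y : P, ∀ x, x < y → rk x < rk y := by
    intro y
    refine wf.induction (C := fun y => ∀ x, x < y → rk x < rk y) y ?_
    intro y IH x hxy
    obtain ⟨z, hxz, hzy⟩ := exists_le_covby hxy
    have h2 := hrk.2.1 z y hzy
    rcases eq_or_lt_of_le hxz with rfl | hlt
    · omega
    · have := IH z hzy.lt x hlt
      omega
  exact main y x h

lemma covby_of_rk_succ {rk : P → ℕ} {r : ℕ} (hrk : IsRankFunction rk r) {w v : P}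
    (h : w < v) (hr : rk w + 1 = rk v) : w ⋖ v := by
  obtain ⟨z, hwz, hzv⟩ := exists_le_covby h
  have h2 := hrk.2.1 z v hzv
  rcases eq_or_lt_of_le hwz with rfl | hlt
  · exact hzv
  · exact absurd (rk_lt_of_lt hrk hlt) (by omega)

lemma satChain_covby_of_val {k : ℕ} {c : Fin (k+1) → P} (hc : SatChain c)
    (a b : Fin (k+1)) (hab : (b : ℕ) = a + 1) : c a ⋖ c b := by
  have hb := b.isLt
  have ha : (a : ℕ) < k := by omega
  have h1 : a = Fin.castSucc ⟨a, ha⟩ := by ext; simp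
  have h2 : b = Fin.succ ⟨a, ha⟩ := by ext; simp [hab]
  rw [h1, h2]; exact hc ⟨a, ha⟩

lemma satChain_strictMono {k : ℕ} {c : Fin (k+1) → P} (hc : SatChain c) : StrictMono c :=
  Fin.strictMono_iff_lt_succ.mpr fun i => (hc i).lt

lemma exists_chain_down (x : P) :
    ∃ (k : ℕ) (c : Fin (k+1) → P), SatChain c ∧ IsMin (c 0) ∧ c (Fin.last k) = x := by
  have wf : WellFounded ((· < ·) : P → P → Prop) := Finite.wellFounded_of_trans_of_irrefl _
  refine wf.induction (C := fun x => ∃ k, ∃ c : Fin (k+1) → P,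
    SatChain c ∧ IsMin (c 0) ∧ c (Fin.last k) = x) x ?_
  intro x IH
  by_cases hmin : IsMin x
  · exact ⟨0, fun _ => x, fun i => i.elim0, hmin, rfl⟩
  · obtain ⟨y, hy⟩ := exists_covby_of_not_isMin hmin
    obtain ⟨k, c, hc, h0, hl⟩ := IH y hy.lt
    refine ⟨k+1, Fin.snoc c x, ?_, ?_, ?_⟩
    · intro i
      induction i using Fin.lastCases with
      | last =>
        rw [Fin.succ_last, Fin.snoc_last, Fin.snoc_castSucc, hl]
        exact hy
      | cast j =>
        rw [Fin.succ_castSucc, Fin.snoc_castSucc, Fin.snoc_castSucc]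
        exact hc j
    · have h00 : (0 : Fin (k+2)) = Fin.castSucc 0 := by simp
      rw [h00, Fin.snoc_castSucc]; exact h0
    · rw [Fin.snoc_last]

lemma exists_chain_up (x : P) :
    ∃ (k : ℕ) (c : Fin (k+1) → P), SatChain c ∧ c 0 = x ∧ IsMax (c (Fin.last k)) := by
  have wf : WellFounded ((· > ·) : P → P → Prop) := Finite.wellFounded_of_trans_of_irrefl _
  refine wf.induction (C := fun x => ∃ k, ∃ c : Fin (k+1) → P,
    SatChain c ∧ c 0 = x ∧ IsMax (c (Fin.last k))) x ?_
  intro x IH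
  by_cases hmax : IsMax x
  · exact ⟨0, fun _ => x, fun i => i.elim0, rfl, hmax⟩
  · obtain ⟨y, hy⟩ := exists_covby_of_not_isMax hmax
    obtain ⟨k, c, hc, h0, hl⟩ := IH y hy.lt
    refine ⟨k+1, Fin.cons x c, ?_, Fin.cons_zero .., ?_⟩
    · intro i
      induction i using Fin.cases with
      | zero =>
        rw [Fin.castSucc_zero, Fin.cons_zero, Fin.cons_succ, h0]
        exact hy
      | succ j =>
        rw [← Fin.succ_castSucc, Fin.cons_succ, Fin.cons_succ]
        exact hc j
    · rw [← Fin.succ_last, Fin.cons_succ]; exact hl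

lemma exists_maxchain_through (v : P) :
    ∃ k ∈ range (Fintype.card P), ∃ c : Fin (k+1) → P, MaxChain c ∧ ∃ j, c j = v := by
  classical
  obtain ⟨k1, c1, hc1, hmin, hl1⟩ := exists_chain_down v
  obtain ⟨k2, c2, hc2, h02, hmax⟩ := exists_chain_up v
  set c : Fin (k1 + k2 + 1) → P := fun j =>
    if h : (j : ℕ) ≤ k1 then c1 ⟨j, by omega⟩
    else c2 ⟨(j : ℕ) - k1, by have := j.isLt; omega⟩ with hcdef
  have hlow : ∀ (j : Fin (k1+k2+1)) (h : (j : ℕ) ≤ k1), c j = c1 ⟨j, by omega⟩ :=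
    fun j h => dif_pos h
  have hhigh : ∀ (j : Fin (k1+k2+1)) (h : ¬ (j : ℕ) ≤ k1),
      c j = c2 ⟨(j : ℕ) - k1, by have := j.isLt; omega⟩ :=
    fun j h => dif_neg h
  have hsat : SatChain c := by
    intro i
    have hi := i.isLt
    by_cases h1 : (i : ℕ) + 1 ≤ k1
    · rw [hlow i.castSucc (by simp; omega), hlow i.succ (by simp [Fin.val_succ]; omega)]
      exact satChain_covby_of_val hc1 _ _ (by simp)
    · by_cases h2 : (i : ℕ) ≤ k1
      · have hk2 : 0 < k2 := by omega
        have ha : c i.castSucc = v := by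
          rw [hlow i.castSucc (by simpa using h2), ← hl1]
          congr 1
          ext
          simp only [Fin.coe_castSucc, Fin.val_last]
          omega
        have hb : c i.succ = c2 ⟨1, by omega⟩ := by
          rw [hhigh i.succ (by simp [Fin.val_succ]; omega)]
          congr 1
          ext
          simp only [Fin.val_succ]
          omega
        rw [ha, hb, ← h02]
        exact satChain_covby_of_val hc2 _ _ (by simp)
      · rw [hhigh i.castSucc (by simpa using h2), hhigh i.succ (by simp [Fin.val_succ]; omega)]
        exact satChain_covby_of_val hc2 _ _ (by simp [Fin.val_succ]; omega)
  have hmin' : IsMin (c 0) := by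
    rw [hlow 0 (by simp)]
    convert hmin using 2
    all_goals { ext; simp }
  have hvmem : ∃ j, c j = v := by
    refine ⟨⟨k1, by omega⟩, ?_⟩
    rw [hlow ⟨k1, by omega⟩ (by simp)]
    rw [show (⟨((⟨k1, by omega⟩ : Fin (k1+k2+1)) : ℕ), by simp⟩ : Fin (k1+1)) = Fin.last k1
      from by ext; simp]
    exact hl1
  have hmax' : IsMax (c (Fin.last (k1+k2))) := by
    by_cases hk : k2 = 0
    · subst hk
      have hvmax : IsMax v := by
        rw [← h02]
        convert hmax using 2
        rfl
      rw [hlow (Fin.last (k1+0)) (by simp)]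
      rw [show (⟨((Fin.last (k1+0) : Fin (k1+0+1)) : ℕ), by omega⟩ : Fin (k1+1)) = Fin.last k1
        from by ext; simp, hl1]
      exact hvmax
    · rw [hhigh (Fin.last (k1+k2)) (by simp; omega)]
      convert hmax using 2
      all_goals { ext; simp }
  have hcard : k1 + k2 + 1 ≤ Fintype.card P := by
    have := Fintype.card_le_of_injective c (satChain_strictMono hsat).injective
    simpa using this
  exact ⟨k1 + k2, by simp [mem_range]; omega, c, ⟨hsat, hmin', hmax'⟩, hvmem⟩

end PosetFacts
section ToggleFacts

set_option linter.unusedSectionVars false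

variable {P : Type*} [Fintype P] [PartialOrder P]

/-! ### Upsilon lemmas -/

lemma upsilon_nonneg_term {g : P → ℝ} (hg : ∀ x, 0 < g x) {k : ℕ} (c : Fin (k+1) → P) :
    0 < (List.ofFn (g ∘ c)).prod := by
  rw [List.prod_ofFn]
  exact Finset.prod_pos fun j _ => hg _

lemma upsilon_pos {g : P → ℝ} (hg : ∀ x, 0 < g x) (v : P) : 0 < Upsilon g v := by
  classical
  obtain ⟨k, hk, c, hc, hjv⟩ := exists_maxchain_through v
  unfold Upsilon
  refine Finset.sum_pos' (fun k _ => Finset.sum_nonneg fun c _ => (upsilon_nonneg_term hg c).le)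
    ⟨k, hk, ?_⟩
  refine Finset.sum_pos' (fun c _ => (upsilon_nonneg_term hg c).le)
    ⟨c, Finset.mem_filter.mpr ⟨mem_univ _, hc, hjv⟩, upsilon_nonneg_term hg c⟩

lemma upsilon_update_one (g : P → ℝ) (v : P) :
    Upsilon g v = g v * Upsilon (Function.update g v 1) v := by
  classical
  unfold Upsilon
  rw [Finset.mul_sum]
  refine Finset.sum_congr rfl fun k _ => ?_
  rw [Finset.mul_sum]
  refine Finset.sum_congr rfl fun c hc => ?_
  simp only [Finset.mem_filter] at hc
  obtain ⟨-, hmc, j₀, hj₀⟩ := hc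
  have hinj : Function.Injective c := (satChain_strictMono hmc.1).injective
  rw [List.prod_ofFn, List.prod_ofFn]
  rw [← Finset.mul_prod_erase univ (fun i => (g ∘ c) i) (mem_univ j₀),
      ← Finset.mul_prod_erase univ (fun i => (Function.update g v 1 ∘ c) i) (mem_univ j₀)]
  have hne : ∀ i ∈ univ.erase j₀, (Function.update g v 1 ∘ c) i = (g ∘ c) i := by
    intro i hi
    have hci : c i ≠ v := fun h => (Finset.mem_erase.mp hi).1 (hinj (h.trans hj₀.symm))
    simp [Function.update_of_ne hci]
  rw [Finset.prod_congr rfl hne]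
  simp only [Function.comp_apply]
  rw [hj₀]
  simp

lemma upsilon_update (g : P → ℝ) (v : P) (t : ℝ) :
    Upsilon (Function.update g v t) v = t * Upsilon (Function.update g v 1) v := by
  rw [upsilon_update_one (Function.update g v t) v, Function.update_idem,
    Function.update_self]

lemma atog_eq_update (C : ℝ) (v : P) (g : P → ℝ) :
    atog C v g = Function.update g v (C / Upsilon g v) := by
  funext x
  simp [atog, Function.update_apply]

/-- Chains through `v` avoid anything incomparable to `v`. -/
lemma upsilon_update_incomp (g : P → ℝ) {v w : P} (hvw : ¬ v ≤ w) (hwv : ¬ w ≤ v) (t : ℝ) :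
    Upsilon (Function.update g w t) v = Upsilon g v := by
  classical
  unfold Upsilon
  refine Finset.sum_congr rfl fun k _ => Finset.sum_congr rfl fun c hc => ?_
  simp only [Finset.mem_filter] at hc
  obtain ⟨-, hmc, j₀, hj₀⟩ := hc
  have hmono := satChain_strictMono hmc.1
  have hnw : ∀ i, c i ≠ w := by
    intro i hci
    rcases le_total i j₀ with h | h
    · exact hwv (hci ▸ hj₀ ▸ hmono.monotone h)
    · exact hvw (hj₀ ▸ hci ▸ hmono.monotone h)
  rw [List.prod_ofFn, List.prod_ofFn]
  exact Finset.prod_congr rfl fun i _ => by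
    simp [Function.update_of_ne (hnw i)]

lemma atog_pos {C : ℝ} (hC : 0 < C) (v : P) {g : P → ℝ} (hg : ∀ x, 0 < g x) :
    ∀ x, 0 < atog C v g x := by
  intro x
  unfold atog
  by_cases hx : x = v
  · simp only [hx, if_pos rfl]
    exact div_pos hC (upsilon_pos hg v)
  · simpa [hx] using hg x

lemma atog_atog {C : ℝ} (hC : 0 < C) (v : P) {g : P → ℝ} (hg : ∀ x, 0 < g x) :
    atog C v (atog C v g) = g := by
  have hU1 : 0 < Upsilon (Function.update g v 1) v :=
    upsilon_pos (fun x => by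
      rcases eq_or_ne x v with rfl | hx
      · simp
      · simp [Function.update_of_ne hx]; exact hg x) v
  have hU : 0 < Upsilon g v := upsilon_pos hg v
  funext x
  rcases eq_or_ne x v with rfl | hx
  · show (if x = x then C / Upsilon (atog C x g) x else atog C x g x) = g x
    rw [if_pos rfl, atog_eq_update, upsilon_update]
    rw [upsilon_update_one g x] at hU ⊢
    have hgx := hg x
    field_simp
  · show (if x = v then _ else atog C v g x) = g x
    rw [if_neg hx]
    show (if x = v then _ else g x) = g x
    rw [if_neg hx]

lemma atog_comm {C : ℝ} {v w : P} (hvw : ¬ v ≤ w) (hwv : ¬ w ≤ v) (g : P → ℝ) :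
    atog C v (atog C w g) = atog C w (atog C v g) := by
  have hne : v ≠ w := fun h => hvw (h ▸ le_refl v)
  have h1 : Upsilon (atog C w g) v = Upsilon g v := by
    rw [atog_eq_update]; exact upsilon_update_incomp g hvw hwv _
  have h2 : Upsilon (atog C v g) w = Upsilon g w := by
    rw [atog_eq_update]; exact upsilon_update_incomp g hwv hvw _
  funext x
  simp only [atog]
  rcases eq_or_ne x v with rfl | hxv
  · rw [if_pos rfl, if_neg hne, if_pos rfl, h1]
  · rcases eq_or_ne x w with rfl | hxw
    · simp only [if_neg hxv, if_pos rfl, h2]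
    · simp only [if_neg hxv, if_neg hxw]

/-! ### otog lemmas -/

lemma lowSum_congr {f g : P → ℝ} {x : P} (h : ∀ y, y ⋖ x → f y = g y) :
    lowSum f x = lowSum g x := by
  unfold lowSum
  congr 1
  exact Finset.sum_congr rfl fun y hy => h y (Finset.mem_filter.mp hy).2

lemma upInvSum_congr {C : ℝ} {f g : P → ℝ} {x : P} (h : ∀ y, x ⋖ y → f y = g y) :
    upInvSum C f x = upInvSum C g x := by
  unfold upInvSum
  congr 1
  exact Finset.sum_congr rfl fun y hy => by rw [h y (Finset.mem_filter.mp hy).2]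

lemma lowSum_pos {f : P → ℝ} (hf : ∀ x, 0 < f x) (x : P) : 0 < lowSum f x := by
  unfold lowSum
  by_cases hmin : IsMin x
  · rw [if_pos hmin]
    exact add_pos_of_pos_of_nonneg one_pos (Finset.sum_nonneg fun y _ => (hf y).le)
  · rw [if_neg hmin, zero_add]
    obtain ⟨y, hy⟩ := exists_covby_of_not_isMin hmin
    exact Finset.sum_pos (fun z _ => hf z) ⟨y, by simp [hy]⟩

lemma upInvSum_pos {C : ℝ} (hC : 0 < C) {f : P → ℝ} (hf : ∀ x, 0 < f x) (x : P) :
    0 < upInvSum C f x := by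
  unfold upInvSum
  by_cases hmax : IsMax x
  · rw [if_pos hmax]
    exact add_pos_of_pos_of_nonneg (one_div_pos.mpr hC)
      (Finset.sum_nonneg fun y _ => (one_div_pos.mpr (hf y)).le)
  · rw [if_neg hmax, zero_add]
    obtain ⟨y, hy⟩ := exists_covby_of_not_isMax hmax
    exact Finset.sum_pos (fun z _ => one_div_pos.mpr (hf z)) ⟨y, by simp [hy]⟩

lemma otog_apply_ne {C : ℝ} {v x : P} (h : x ≠ v) (f : P → ℝ) : otog C v f x = f x :=
  if_neg h

lemma otog_apply_self (C : ℝ) (v : P) (f : P → ℝ) :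
    otog C v f v = lowSum f v / (f v * upInvSum C f v) := if_pos rfl

lemma otog_pos {C : ℝ} (hC : 0 < C) (v : P) {f : P → ℝ} (hf : ∀ x, 0 < f x) :
    ∀ x, 0 < otog C v f x := by
  intro x
  rcases eq_or_ne x v with rfl | hx
  · rw [otog_apply_self]
    exact div_pos (lowSum_pos hf x) (mul_pos (hf x) (upInvSum_pos hC hf x))
  · rw [otog_apply_ne hx]
    exact hf x

lemma otog_otog {C : ℝ} (hC : 0 < C) (v : P) {f : P → ℝ} (hf : ∀ x, 0 < f x) :
    otog C v (otog C v f) = f := by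
  funext x
  rcases eq_or_ne x v with rfl | hx
  · rw [otog_apply_self]
    have hL : lowSum (otog C x f) x = lowSum f x :=
      lowSum_congr fun y hy => otog_apply_ne (ne_of_lt hy.lt) f
    have hU : upInvSum C (otog C x f) x = upInvSum C f x :=
      upInvSum_congr fun y hy => otog_apply_ne (ne_of_gt hy.lt) f
    rw [hL, hU, otog_apply_self]
    have h1 := (lowSum_pos hf x).ne'
    have h2 := (upInvSum_pos hC hf x).ne'
    have h3 := (hf x).ne'
    field_simp
  · rw [otog_apply_ne hx, otog_apply_ne hx]

lemma otog_comm {C : ℝ} {v w : P} (h1 : ¬ v ⋖ w) (h2 : ¬ w ⋖ v) (hne : v ≠ w) (f : P → ℝ) :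
    otog C v (otog C w f) = otog C w (otog C v f) := by
  have key : ∀ (a b : P), ¬ a ⋖ b → ¬ b ⋖ a → a ≠ b →
      otog C a (otog C b f) a = otog C b (otog C a f) a := by
    intro a b hab hba hne
    rw [otog_apply_ne hne, otog_apply_self, otog_apply_self]
    have hL : lowSum (otog C b f) a = lowSum f a :=
      lowSum_congr fun y hy => otog_apply_ne (fun h => hba (by rwa [h] at hy)) f
    have hU : upInvSum C (otog C b f) a = upInvSum C f a :=
      upInvSum_congr fun y hy => otog_apply_ne (fun h => hab (by rwa [h] at hy)) f
    rw [hL, hU, otog_apply_ne hne]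
  funext x
  rcases eq_or_ne x v with rfl | hxv
  · exact key x w h1 h2 hne
  · rcases eq_or_ne x w with rfl | hxw
    · exact (key x v h2 h1 (Ne.symm hne)).symm
    · rw [otog_apply_ne hxv, otog_apply_ne hxw, otog_apply_ne hxw, otog_apply_ne hxv]

end ToggleFacts
section FoldMachinery

set_option linter.unusedSectionVars false

variable {P : Type*} [Fintype P] [PartialOrder P]

variable (t : P → (P → ℝ) → P → ℝ)

/-- Apply toggles along a list, first element first. -/
noncomputable def tfold (l : List P) (f : P → ℝ) : P → ℝ := l.foldl (fun h v => t v h) f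

lemma tfold_nil (f : P → ℝ) : tfold t [] f = f := rfl

lemma tfold_cons (x : P) (l : List P) (f : P → ℝ) :
    tfold t (x :: l) f = tfold t l (t x f) := rfl

lemma tfold_append (l₁ l₂ : List P) (f : P → ℝ) :
    tfold t (l₁ ++ l₂) f = tfold t l₂ (tfold t l₁ f) := List.foldl_append ..

lemma tfold_comm (x : P) (l : List P)
    (h : ∀ y ∈ l, ∀ f, t x (t y f) = t y (t x f)) (f : P → ℝ) :
    tfold t l (t x f) = t x (tfold t l f) := by
  induction l generalizing f with
  | nil => rfl
  | cons y l ih =>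
    rw [tfold_cons, tfold_cons, ← h y (List.mem_cons_self ..) f,
      ih (fun z hz => h z (List.mem_cons_of_mem _ hz))]

lemma tfold_block_comm (l₁ l₂ : List P)
    (h : ∀ x ∈ l₁, ∀ y ∈ l₂, ∀ f, t x (t y f) = t y (t x f)) (f : P → ℝ) :
    tfold t l₁ (tfold t l₂ f) = tfold t l₂ (tfold t l₁ f) := by
  induction l₁ generalizing f with
  | nil => rfl
  | cons x l₁ ih =>
    rw [tfold_cons, tfold_cons,
      ← tfold_comm t x l₂ (fun y hy => h x (List.mem_cons_self ..) y hy),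
      ih (fun z hz => h z (List.mem_cons_of_mem _ hz))]

lemma tfold_middle (x : P) (l₁ l₂ : List P)
    (h : ∀ y ∈ l₁, ∀ f, t x (t y f) = t y (t x f)) (f : P → ℝ) :
    tfold t (l₁ ++ x :: l₂) f = tfold t (x :: (l₁ ++ l₂)) f := by
  rw [tfold_append, tfold_cons, tfold_cons, tfold_append, tfold_comm t x l₁ h]

lemma tfold_pos (hp : ∀ x f, (∀ y, 0 < f y) → ∀ y, 0 < t x f y)
    (l : List P) (f : P → ℝ) (hf : ∀ y, 0 < f y) : ∀ y, 0 < tfold t l f y := by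
  induction l generalizing f with
  | nil => exact hf
  | cons x l ih => exact ih _ (hp x f hf)

lemma tfold_cancel_rev (hp : ∀ x f, (∀ y, 0 < f y) → ∀ y, 0 < t x f y)
    (hinv : ∀ x f, (∀ y, 0 < f y) → t x (t x f) = f)
    (l : List P) (f : P → ℝ) (hf : ∀ y, 0 < f y) :
    tfold t l.reverse (tfold t l f) = f := by
  induction l generalizing f with
  | nil => rfl
  | cons x l ih =>
    rw [tfold_cons, List.reverse_cons, tfold_append, ih _ (hp x f hf)]
    exact hinv x f hf

/-- Any two "linear extensions" (w.r.t. a pairwise condition `Q` such that mutually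
`Q`-related pairs commute) of the same set give the same toggle product. -/
lemma tfold_linext (Q : P → P → Prop)
    (hcomm : ∀ a b, Q a b → Q b a → ∀ f, t a (t b f) = t b (t a f)) :
    ∀ (l₁ l₂ : List P), l₁.Nodup → l₂.Nodup → (∀ x, x ∈ l₁ ↔ x ∈ l₂) →
      l₁.Pairwise Q → l₂.Pairwise Q → ∀ f, tfold t l₁ f = tfold t l₂ f := by
  intro l₁
  induction l₁ with
  | nil =>
    intro l₂ _ _ hm _ _ f
    cases l₂ with
    | nil => rfl
    | cons y l => exact absurd (List.mem_cons_self ..) (fun h => by simpa using (hm y).2 h)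
  | cons x l₁ ih =>
    intro l₂ h1 h2 hm hQ1 hQ2 f
    have hx2 : x ∈ l₂ := (hm x).1 (List.mem_cons_self ..)
    obtain ⟨p, s, rfl⟩ := List.append_of_mem hx2
    have hnm : x ∉ p ++ s := (List.nodup_cons.mp ((List.nodup_middle).mp h2)).1
    have hcom : ∀ w ∈ p, ∀ f, t x (t w f) = t w (t x f) := by
      intro w hw f
      have hwx : Q w x := by
        have := (List.pairwise_append.mp hQ2).2.2
        exact this w hw x (List.mem_cons_self ..)
      have hwne : w ≠ x := fun h => hnm (h ▸ List.mem_append.mpr (Or.inl hw))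
      have hwl : w ∈ l₁ := by
        have : w ∈ x :: l₁ := (hm w).2 (by simp [hw])
        exact (List.mem_cons.mp this).resolve_left hwne
      have hxw : Q x w := (List.pairwise_cons.mp hQ1).1 w hwl
      exact hcomm x w hxw hwx f
    rw [tfold_middle t x p s hcom, tfold_cons, tfold_cons]
    apply ih (p ++ s)
    · exact (List.nodup_cons.mp h1).2
    · exact (List.nodup_cons.mp (List.nodup_middle.mp h2)).2
    · intro y
      constructor
      · intro hy
        have hy2 : y ∈ p ++ x :: s := (hm y).1 (List.mem_cons_of_mem _ hy)
        have hyx : y ≠ x := fun h => (List.nodup_cons.mp h1).1 (h ▸ hy)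
        simp only [List.mem_append, List.mem_cons] at hy2 ⊢
        tauto
      · intro hy
        have hy2 : y ∈ p ++ x :: s := by
          simp only [List.mem_append, List.mem_cons] at hy ⊢; tauto
        have := (hm y).2 hy2
        rcases List.mem_cons.mp this with rfl | h
        · exact absurd hy hnm
        · exact h
    · exact (List.pairwise_cons.mp hQ1).2
    · exact List.Pairwise.sublist (by
        have : List.Sublist s (x :: s) := List.sublist_cons_self x s
        exact this.append_left p) hQ2

lemma pairwise_of_nodup_of_ne {Q : P → P → Prop} {l : List P}
    (h : ∀ a ∈ l, ∀ b ∈ l, a ≠ b → Q a b) (hl : l.Nodup) : l.Pairwise Q := by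
  induction l with
  | nil => exact List.Pairwise.nil
  | cons x l ih =>
    rw [List.nodup_cons] at hl
    refine List.pairwise_cons.mpr ⟨fun b hb => h x (List.mem_cons_self ..) b
      (List.mem_cons_of_mem _ hb) (fun hxb => hl.1 (hxb ▸ hb)), ?_⟩
    exact ih (fun a ha b hb => h a (List.mem_cons_of_mem _ ha) b (List.mem_cons_of_mem _ hb)) hl.2

/-! ### flatten of rank blocks -/

lemma tfold_rankfold (bl : ℕ → List P) (L : List ℕ) (f : P → ℝ) :
    L.foldl (fun h j => tfold t (bl j) h) f = tfold t ((L.map bl).flatten) f := by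
  induction L generalizing f with
  | nil => rfl
  | cons j L ih =>
    rw [List.foldl_cons, List.map_cons, List.flatten_cons, tfold_append, ih]

lemma mem_flatten_blocks {bl : ℕ → List P} {L : List ℕ} {x : P} :
    x ∈ (L.map bl).flatten ↔ ∃ j ∈ L, x ∈ bl j := by
  simp [List.mem_flatten]

lemma nodup_flatten_blocks {bl : ℕ → List P} {rk : P → ℕ} {L : List ℕ}
    (hL : L.Nodup) (hbl : ∀ j, (bl j).Nodup) (hrk : ∀ j, ∀ x ∈ bl j, rk x = j) :
    ((L.map bl).flatten).Nodup := by
  induction L with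
  | nil => exact List.nodup_nil
  | cons j L ih =>
    rw [List.nodup_cons] at hL
    rw [List.map_cons, List.flatten_cons]
    refine List.Nodup.append (hbl j) (ih hL.2) ?_
    intro a ha ha'
    obtain ⟨k, hk, hak⟩ := mem_flatten_blocks.mp ha'
    have h1 := hrk j a ha
    have h2 := hrk k a hak
    exact hL.1 (by rw [← h1, h2]; exact hk)

lemma pairwise_flatten_blocks {bl : ℕ → List P} {L : List ℕ} {Q : P → P → Prop}
    {R : ℕ → ℕ → Prop}
    (hwithin : ∀ j, (bl j).Pairwise Q)
    (hcross : ∀ j k, R j k → ∀ a ∈ bl j, ∀ b ∈ bl k, Q a b)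
    (hL : L.Pairwise R) : ((L.map bl).flatten).Pairwise Q := by
  induction L with
  | nil => exact List.Pairwise.nil
  | cons j L ih =>
    rw [List.pairwise_cons] at hL
    rw [List.map_cons, List.flatten_cons, List.pairwise_append]
    refine ⟨hwithin j, ih hL.2, ?_⟩
    intro a ha b hb
    obtain ⟨k, hk, hbk⟩ := mem_flatten_blocks.mp hb
    exact hcross j k (hL.1 k hk) a ha b hbk

end FoldMachinery
section Parts12

set_option linter.unusedSectionVars false

variable {P : Type*} [Fintype P] [PartialOrder P]
variable {C : ℝ} {rk : P → ℕ} {r : ℕ}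

lemma atog_comm_of_Q (C : ℝ) {a b : P} (h1 : ¬ b < a) (h2 : ¬ a < b) (f : P → ℝ) :
    atog C a (atog C b f) = atog C b (atog C a f) := by
  rcases eq_or_ne a b with rfl | hab
  · rfl
  · exact atog_comm (fun h => h2 (lt_of_le_of_ne h hab))
      (fun h => h1 (lt_of_le_of_ne h hab.symm)) f

lemma otog_comm_of_Q (C : ℝ) {a b : P} (h1 : ¬ b < a) (h2 : ¬ a < b) (f : P → ℝ) :
    otog C a (otog C b f) = otog C b (otog C a f) := by
  rcases eq_or_ne a b with rfl | hab
  · rfl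
  · exact otog_comm (fun h => h2 h.lt) (fun h => h1 h.lt) hab f

lemma applyATogs_eq_tfold (C : ℝ) (l : List P) (g : P → ℝ) :
    applyATogs C l g = tfold (atog C) l g := rfl

lemma applyOTogs_eq_tfold (C : ℝ) (l : List P) (f : P → ℝ) :
    applyOTogs C l f = tfold (otog C) l f := rfl

/-- cancellation for a list of pairwise-incomparable elements (antichain toggles) -/
lemma tfold_atog_selfcancel (hC : 0 < C) {l : List P}
    (hn : l.Nodup) (hinc : ∀ a ∈ l, ∀ b ∈ l, a ≠ b → ¬ a < b)
    (h : P → ℝ) (hh : ∀ y, 0 < h y) :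
    tfold (atog C) l (tfold (atog C) l h) = h := by
  have hpw : l.Pairwise (fun a b => ¬ b < a) :=
    pairwise_of_nodup_of_ne (fun a ha b hb hab => hinc b hb a ha hab.symm) hn
  have hpwr : l.reverse.Pairwise (fun a b => ¬ b < a) :=
    pairwise_of_nodup_of_ne
      (fun a ha b hb hab => hinc b (by simpa using hb) a (by simpa using ha) hab.symm)
      (by simpa using hn)
  rw [show tfold (atog C) l (tfold (atog C) l h)
      = tfold (atog C) l.reverse (tfold (atog C) l h) from
    tfold_linext _ _ (fun a b h1 h2 f => atog_comm_of_Q C h1 h2 f) l l.reverse hn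
      (by simpa using hn) (by simp) hpw hpwr _]
  exact tfold_cancel_rev _ (fun x f hf => atog_pos hC x hf) (fun x f hf => atog_atog hC x hf)
    l h hh

lemma part1 (hC : 0 < C) (hrk : IsRankFunction rk r) (v : P) (i : ℕ) (hv : rk v = i)
    (rl : ℕ → List P) (hrl : ∀ j, (rl j).Nodup ∧ ∀ x : P, x ∈ rl j ↔ rk x = j)
    (lc : List P) (hlc : lc.Nodup ∧ ∀ y : P, y ∈ lc ↔ y ⋖ v)
    (g : P → ℝ) (hg : ∀ x, 0 < g x) :
    TstarApp C v lc g
      = applyATogs C (if i = 0 then [] else rl (i - 1))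
          (atog C v (applyATogs C (if i = 0 then [] else rl (i - 1)) g)) := by
  by_cases hi : i = 0
  · have hmin : IsMin v := by
      by_contra h
      obtain ⟨y, hy⟩ := exists_covby_of_not_isMin h
      have := hrk.2.1 y v hy
      omega
    have hlc0 : lc = [] := List.eq_nil_iff_forall_not_mem.mpr
      (fun y hy => not_le_of_gt ((hlc.2 y).1 hy).lt (hmin ((hlc.2 y).1 hy).le))
    rw [if_pos hi, hlc0]
    rfl
  · rw [if_neg hi]
    set R := rl (i-1) with hRdef
    have hR := hrl (i-1)
    have hRrank : ∀ x ∈ R, rk x = i - 1 := fun x hx => (hR.2 x).1 hx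
    have hlcrank : ∀ y ∈ lc, rk y = i - 1 := by
      intro y hy
      have := hrk.2.1 y v ((hlc.2 y).1 hy)
      omega
    set N := R.filter (fun w => ¬ w ⋖ v) with hNdef
    have hNsub : ∀ x ∈ N, x ∈ R ∧ ¬ x ⋖ v := by
      intro x hx
      have := List.mem_filter.mp hx
      exact ⟨this.1, of_decide_eq_true this.2⟩
    have hNrank : ∀ x ∈ N, rk x = i - 1 := fun x hx => hRrank x (hNsub x hx).1
    -- all relevant elements have rank i-1 and are pairwise incomparable
    have hincomp : ∀ a b : P, rk a = i - 1 → rk b = i - 1 → a ≠ b → ¬ a < b := by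
      intro a b ha hb hab h
      have := rk_lt_of_lt hrk h
      omega
    -- D = lc ++ N is a permutation of R
    have hDnodup : (lc ++ N).Nodup := by
      refine List.Nodup.append hlc.1 (hR.1.filter _) ?_
      intro a ha ha'
      exact (hNsub a ha').2 ((hlc.2 a).1 ha)
    have hDrank : ∀ x ∈ lc ++ N, rk x = i - 1 := by
      intro x hx
      rcases List.mem_append.mp hx with h | h
      · exact hlcrank x h
      · exact hNrank x h
    have hDmem : ∀ x, x ∈ R ↔ x ∈ lc ++ N := by
      intro x
      constructor
      · intro hx
        by_cases hxv : x ⋖ v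
        · exact List.mem_append.mpr (Or.inl ((hlc.2 x).2 hxv))
        · exact List.mem_append.mpr (Or.inr (List.mem_filter.mpr ⟨hx, decide_eq_true hxv⟩))
      · intro hx
        rcases List.mem_append.mp hx with h | h
        · exact (hR.2 x).2 (hlcrank x h)
        · exact (hNsub x h).1
    have hpwR : R.Pairwise (fun a b => ¬ b < a) :=
      pairwise_of_nodup_of_ne
        (fun a ha b hb hab => hincomp b a (hRrank b hb) (hRrank a ha) hab.symm) hR.1
    have hpwD : (lc ++ N).Pairwise (fun a b => ¬ b < a) :=
      pairwise_of_nodup_of_ne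
        (fun a ha b hb hab => hincomp b a (hDrank b hb) (hDrank a ha) hab.symm) hDnodup
    have hRD : ∀ h : P → ℝ, tfold (atog C) R h = tfold (atog C) (lc ++ N) h :=
      fun h => tfold_linext _ _ (fun a b h1 h2 f => atog_comm_of_Q C h1 h2 f) R (lc ++ N)
        hR.1 hDnodup hDmem hpwR hpwD h
    -- commute τ_v past N
    have hvN : ∀ w ∈ N, ∀ f : P → ℝ, atog C v (atog C w f) = atog C w (atog C v f) := by
      intro w hw f
      obtain ⟨hwR, hwv⟩ := hNsub w hw
      have hwrk := hRrank w hwR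
      have h1 : ¬ w < v := fun h => hwv (covby_of_rk_succ hrk h (by omega))
      have h2 : ¬ v < w := fun h => by have := rk_lt_of_lt hrk h; omega
      exact atog_comm_of_Q C h1 h2 f
    -- commute lc and N blockwise
    have hlcN : ∀ a ∈ lc, ∀ b ∈ N, ∀ f : P → ℝ,
        atog C a (atog C b f) = atog C b (atog C a f) := by
      intro a ha b hb f
      have hab : a ≠ b := fun h => (hNsub b hb).2 (h ▸ (hlc.2 a).1 ha)
      exact atog_comm_of_Q C
        (hincomp b a (hNrank b hb) (hlcrank a ha) hab.symm)
        (hincomp a b (hlcrank a ha) (hNrank b hb) hab) f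
    -- cancellation of N
    have hNN : ∀ h : P → ℝ, (∀ y, 0 < h y) →
        tfold (atog C) N (tfold (atog C) N h) = h := by
      intro h hh
      exact tfold_atog_selfcancel hC (hR.1.filter _)
        (fun a ha b hb hab => hincomp a b (hNrank a ha) (hNrank b hb) hab) h hh
    -- positivity bookkeeping
    have hposA : ∀ (l : List P) (h : P → ℝ), (∀ y, 0 < h y) → ∀ y, 0 < tfold (atog C) l h y :=
      fun l h hh => tfold_pos _ (fun x f hf => atog_pos hC x hf) l h hh
    have hpos1 : ∀ y, 0 < tfold (atog C) lc (atog C v (tfold (atog C) lc g)) y :=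
      hposA lc _ (atog_pos hC v (hposA lc g hg))
    -- main computation
    rw [applyATogs_eq_tfold, applyATogs_eq_tfold, hRD, hRD, tfold_append, tfold_append,
      show atog C v (tfold (atog C) N (tfold (atog C) lc g))
          = tfold (atog C) N (atog C v (tfold (atog C) lc g)) from
        (tfold_comm _ v N hvN _).symm,
      show tfold (atog C) N (atog C v (tfold (atog C) lc g))
          = tfold (atog C) N (atog C v (tfold (atog C) lc g)) from rfl]
    rw [show tfold (atog C) lc (tfold (atog C) N (atog C v (tfold (atog C) lc g)))
          = tfold (atog C) N (tfold (atog C) lc (atog C v (tfold (atog C) lc g))) from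
        tfold_block_comm _ lc N hlcN _]
    rw [hNN _ hpos1]
    -- LHS : TstarApp
    show tfold (atog C) lc.reverse (atog C v (tfold (atog C) lc g)) = _
    refine tfold_linext _ _ (fun a b h1 h2 f => atog_comm_of_Q C h1 h2 f) lc.reverse lc
      (by simpa using hlc.1) hlc.1 (by simp)
      (pairwise_of_nodup_of_ne (fun a ha b hb hab =>
        hincomp b a (hlcrank b (by simpa using hb)) (hlcrank a (by simpa using ha)) hab.symm)
        (by simpa using hlc.1))
      (pairwise_of_nodup_of_ne (fun a ha b hb hab =>
        hincomp b a (hlcrank b hb) (hlcrank a ha) hab.symm) hlc.1) _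

lemma part2 (hC : 0 < C) (hrk : IsRankFunction rk r) (i : ℕ)
    (rl : ℕ → List P) (hrl : ∀ j, (rl j).Nodup ∧ ∀ x : P, x ∈ rl j ↔ rk x = j)
    (lcf : P → List P) (hlcf : ∀ w : P, (lcf w).Nodup ∧ ∀ y : P, y ∈ lcf w ↔ y ⋖ w) :
    ∀ (l : List P), (∀ w ∈ l, rk w = i) → ∀ (g : P → ℝ), (∀ x, 0 < g x) →
      l.foldl (fun h w => TstarApp C w (lcf w) h) g
        = applyATogs C (if i = 0 then [] else rl (i - 1))
            (applyATogs C l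
              (applyATogs C (if i = 0 then [] else rl (i - 1)) g)) := by
  have hposA : ∀ (l : List P) (h : P → ℝ), (∀ y, 0 < h y) → ∀ y, 0 < tfold (atog C) l h y :=
    fun l h hh => tfold_pos _ (fun x f hf => atog_pos hC x hf) l h hh
  -- cancellation for the rank-(i-1) block
  have hRR : ∀ h : P → ℝ, (∀ y, 0 < h y) →
      tfold (atog C) (if i = 0 then [] else rl (i-1)) (tfold (atog C)
        (if i = 0 then [] else rl (i-1)) h) = h := by
    intro h hh
    by_cases hi : i = 0
    · rw [if_pos hi]; rfl
    · rw [if_neg hi]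
      have hR := hrl (i-1)
      refine tfold_atog_selfcancel hC hR.1 ?_ h hh
      intro a ha b hb hab hlt
      have h1 := (hR.2 a).1 ha
      have h2 := (hR.2 b).1 hb
      have := rk_lt_of_lt hrk hlt
      omega
  intro l
  induction l with
  | nil =>
    intro _ g hg
    simp only [List.foldl_nil, applyATogs_eq_tfold, tfold_nil]
    exact (hRR g hg).symm
  | cons w tl ih =>
    intro hl g hg
    have hw : rk w = i := hl w (List.mem_cons_self ..)
    have htl : ∀ x ∈ tl, rk x = i := fun x hx => hl x (List.mem_cons_of_mem _ hx)
    have hg1 : ∀ y, 0 < (TstarApp C w (lcf w) g) y := by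
      rw [part1 hC hrk w i hw rl hrl (lcf w) (hlcf w) g hg]
      exact hposA _ _ (atog_pos hC w (hposA _ g hg))
    rw [List.foldl_cons, ih htl _ hg1, part1 hC hrk w i hw rl hrl (lcf w) (hlcf w) g hg]
    simp only [applyATogs_eq_tfold]
    rw [hRR (atog C w (tfold (atog C) (if i = 0 then [] else rl (i-1)) g))
      (atog_pos hC w (hposA _ g hg))]
    rfl

end Parts12
section Parts34

set_option linter.unusedSectionVars false

variable {P : Type*} [Fintype P] [PartialOrder P]
variable {C : ℝ} {rk : P → ℕ} {r : ℕ}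

lemma tfold_foldr (t : P → (P → ℝ) → P → ℝ) (l : List P) (X : P → ℝ) :
    l.foldr (fun w h => t w h) X = tfold t l.reverse X := by
  rw [tfold, List.foldl_reverse]

lemma linext_pairwise {A : Set P} {l : List P} (hle : IsLinearExtensionOn A l) :
    l.Pairwise (fun a b => ¬ b < a) := by
  rw [List.pairwise_iff_getElem]
  intro i j hi hj hij hlt
  exact absurd (hle.2.2 j i hj hi hlt) (by omega)

lemma otog_pos' (hC : 0 < C) : ∀ (x : P) (f : P → ℝ), (∀ y, 0 < f y) → ∀ y, 0 < otog C x f y :=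
  fun x f hf => otog_pos hC x hf

lemma foldl_ranks_eq (C : ℝ) (rl : ℕ → List P) (L : List ℕ) (f : P → ℝ) :
    L.foldl (fun h j => applyOTogs C (rl j) h) f = tfold (otog C) ((L.map rl).flatten) f := by
  show L.foldl (fun h j => tfold (otog C) (rl j) h) f = _
  exact tfold_rankfold (otog C) rl L f

lemma pairwise_range_lt (i : ℕ) : (List.range i).Pairwise (· < ·) := by
  rw [List.pairwise_iff_getElem]
  intro a b ha hb hab
  simpa using hab

/-- `part3` in `tfold` form. -/
lemma part3' (hC : 0 < C) (hrk : IsRankFunction rk r) (v : P) (i : ℕ) (hv : rk v = i)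
    (rl : ℕ → List P) (hrl : ∀ j, (rl j).Nodup ∧ ∀ x : P, x ∈ rl j ↔ rk x = j)
    (le_ : List P) (hle : IsLinearExtensionOn {x : P | x < v} le_)
    (f : P → ℝ) (hf : ∀ x, 0 < f x) :
    tauStarApp C v le_ f
      = tfold (otog C) ((((List.range i).reverse).map rl).flatten)
          (otog C v (tfold (otog C) (((List.range i).map rl).flatten) f)) := by
  classical
  have hposO : ∀ (l : List P) (h : P → ℝ), (∀ y, 0 < h y) → ∀ y, 0 < tfold (otog C) l h y :=
    fun l h hh => tfold_pos _ (otog_pos' hC) l h hh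
  set Bl : ℕ → List P := fun j => (rl j).filter (fun x => decide (x < v)) with hBl
  set Nl : ℕ → List P := fun j => (rl j).filter (fun x => decide (¬ x < v)) with hNl
  set A : List P := ((List.range i).map rl).flatten with hA
  set A' : List P := (((List.range i).reverse).map rl).flatten with hA'
  set B : List P := ((List.range i).map Bl).flatten with hB
  set N : List P := ((List.range i).map Nl).flatten with hN
  have hrkmem : ∀ j, ∀ x ∈ rl j, rk x = j := fun j x hx => ((hrl j).2 x).1 hx
  have hBlmem : ∀ j, ∀ x ∈ Bl j, rk x = j ∧ x < v := by
    intro j x hx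
    have := List.mem_filter.mp hx
    exact ⟨hrkmem j x this.1, of_decide_eq_true this.2⟩
  have hNlmem : ∀ j, ∀ x ∈ Nl j, rk x = j ∧ ¬ x < v := by
    intro j x hx
    have := List.mem_filter.mp hx
    exact ⟨hrkmem j x this.1, of_decide_eq_true this.2⟩
  have hQL : ∀ {a b : P}, rk a ≤ rk b → ¬ b < a := by
    intro a b hr hlt
    have := rk_lt_of_lt hrk hlt
    omega
  -- membership characterizations
  have hmemA : ∀ x, x ∈ A ↔ rk x < i := by
    intro x
    rw [hA, mem_flatten_blocks]
    constructor
    · rintro ⟨j, hj, hx⟩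
      rw [hrkmem j x hx]
      simpa using hj
    · intro hx
      exact ⟨rk x, by simpa using hx, ((hrl (rk x)).2 x).2 rfl⟩
  have hmemA' : ∀ x, x ∈ A' ↔ rk x < i := by
    intro x
    rw [hA', mem_flatten_blocks]
    constructor
    · rintro ⟨j, hj, hx⟩
      rw [hrkmem j x hx]
      simpa using hj
    · intro hx
      exact ⟨rk x, by simpa using hx, ((hrl (rk x)).2 x).2 rfl⟩
  have hmemB : ∀ x, x ∈ B ↔ x < v := by
    intro x
    rw [hB, mem_flatten_blocks]
    constructor
    · rintro ⟨j, hj, hx⟩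
      exact (hBlmem j x hx).2
    · intro hx
      have hxr : rk x < i := by
        have := rk_lt_of_lt hrk hx
        omega
      exact ⟨rk x, by simpa using hxr,
        List.mem_filter.mpr ⟨((hrl (rk x)).2 x).2 rfl, decide_eq_true hx⟩⟩
  have hmemN : ∀ x, x ∈ N ↔ (rk x < i ∧ ¬ x < v) := by
    intro x
    rw [hN, mem_flatten_blocks]
    constructor
    · rintro ⟨j, hj, hx⟩
      obtain ⟨h1, h2⟩ := hNlmem j x hx
      exact ⟨by rw [h1]; simpa using hj, h2⟩
    · rintro ⟨h1, h2⟩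
      exact ⟨rk x, by simpa using h1,
        List.mem_filter.mpr ⟨((hrl (rk x)).2 x).2 rfl, decide_eq_true h2⟩⟩
  have hmemBN : ∀ x, x ∈ B ++ N ↔ rk x < i := by
    intro x
    rw [List.mem_append, hmemB, hmemN]
    constructor
    · rintro (h | h)
      · have := rk_lt_of_lt hrk h
        omega
      · exact h.1
    · intro hx
      by_cases hxv : x < v
      · exact Or.inl hxv
      · exact Or.inr ⟨hx, hxv⟩
  -- nodup
  have hndA : A.Nodup := nodup_flatten_blocks List.nodup_range
    (fun j => (hrl j).1) hrkmem
  have hndA' : A'.Nodup := nodup_flatten_blocks (by simp [List.nodup_range])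
    (fun j => (hrl j).1) hrkmem
  have hndB : B.Nodup := nodup_flatten_blocks List.nodup_range
    (fun j => (hrl j).1.filter _) (fun j x hx => (hBlmem j x hx).1)
  have hndN : N.Nodup := nodup_flatten_blocks List.nodup_range
    (fun j => (hrl j).1.filter _) (fun j x hx => (hNlmem j x hx).1)
  have hndBN : (B ++ N).Nodup := by
    refine List.Nodup.append hndB hndN ?_
    intro a ha ha'
    exact ((hmemN a).1 ha').2 ((hmemB a).1 ha)
  -- pairwise conditions
  have hpwblock : ∀ (bl : ℕ → List P), (∀ j, ∀ x ∈ bl j, rk x = j) → (∀ j, (bl j).Nodup) →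
      ∀ {L : List ℕ}, L.Pairwise (· < ·) →
      ((L.map bl).flatten).Pairwise (fun a b => ¬ b < a) := by
    intro bl hblrk hbln L hL
    refine pairwise_flatten_blocks (fun j => ?_) (fun j k hjk a ha b hb => ?_) hL
    · exact pairwise_of_nodup_of_ne
        (fun a ha b hb hab => hQL (le_of_eq ((hblrk j a ha).trans (hblrk j b hb).symm)))
        (hbln j)
    · exact hQL (by rw [hblrk j a ha, hblrk k b hb]; omega)
  have hpwblock' : ∀ (bl : ℕ → List P), (∀ j, ∀ x ∈ bl j, rk x = j) → (∀ j, (bl j).Nodup) →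
      ∀ {L : List ℕ}, L.Pairwise (· > ·) →
      ((L.map bl).flatten).Pairwise (fun a b => ¬ a < b) := by
    intro bl hblrk hbln L hL
    refine pairwise_flatten_blocks (fun j => ?_) (fun j k hjk a ha b hb => ?_) hL
    · exact pairwise_of_nodup_of_ne
        (fun a ha b hb hab => hQL (le_of_eq ((hblrk j b hb).trans (hblrk j a ha).symm)))
        (hbln j)
    · exact hQL (by rw [hblrk j a ha, hblrk k b hb]; omega)
  have hrange := pairwise_range_lt i
  have hrange' : ((List.range i).reverse).Pairwise (· > ·) :=
    List.pairwise_reverse.mpr hrange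
  have hpwA : A.Pairwise (fun a b => ¬ b < a) :=
    hpwblock rl hrkmem (fun j => (hrl j).1) hrange
  have hpwA' : A'.Pairwise (fun a b => ¬ a < b) :=
    hpwblock' rl hrkmem (fun j => (hrl j).1) hrange'
  have hpwB : B.Pairwise (fun a b => ¬ b < a) :=
    hpwblock Bl (fun j x hx => (hBlmem j x hx).1) (fun j => (hrl j).1.filter _) hrange
  have hpwN : N.Pairwise (fun a b => ¬ b < a) :=
    hpwblock Nl (fun j x hx => (hNlmem j x hx).1) (fun j => (hrl j).1.filter _) hrange
  have hpwBN : (B ++ N).Pairwise (fun a b => ¬ b < a) := by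
    rw [List.pairwise_append]
    refine ⟨hpwB, hpwN, ?_⟩
    intro a ha b hb hba
    exact ((hmemN b).1 hb).2 (hba.trans ((hmemB a).1 ha))
  have hpwBNrev : ((B ++ N).reverse).Pairwise (fun a b => ¬ a < b) :=
    List.pairwise_reverse.mpr hpwBN
  have hpwle : le_.Pairwise (fun a b => ¬ b < a) := linext_pairwise hle
  have hpwlerev : (le_.reverse).Pairwise (fun a b => ¬ a < b) :=
    List.pairwise_reverse.mpr hpwle
  have hpwBrev : (B.reverse).Pairwise (fun a b => ¬ a < b) :=
    List.pairwise_reverse.mpr hpwB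
  -- the toggles at mutually Q-related pairs commute
  have hcommL : ∀ a b : P, ¬ b < a → ¬ a < b → ∀ h : P → ℝ,
      otog C a (otog C b h) = otog C b (otog C a h) :=
    fun a b h1 h2 h => otog_comm_of_Q C h1 h2 h
  have hcommR : ∀ a b : P, ¬ a < b → ¬ b < a → ∀ h : P → ℝ,
      otog C a (otog C b h) = otog C b (otog C a h) :=
    fun a b h1 h2 h => otog_comm_of_Q C h2 h1 h
  -- list equalities
  have e1 : ∀ h : P → ℝ, tfold (otog C) A h = tfold (otog C) (B ++ N) h :=
    tfold_linext _ _ hcommL A (B ++ N) hndA hndBN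
      (fun x => by rw [hmemA, hmemBN]) hpwA hpwBN
  have e2 : ∀ h : P → ℝ, tfold (otog C) A' h = tfold (otog C) ((B ++ N).reverse) h :=
    tfold_linext _ _ hcommR A' ((B ++ N).reverse) hndA' (List.nodup_reverse.mpr hndBN)
      (fun x => by rw [hmemA']; simp only [List.mem_reverse]; rw [hmemBN]) hpwA' hpwBNrev
  have e3 : ∀ h : P → ℝ, tfold (otog C) B h = tfold (otog C) le_ h :=
    tfold_linext _ _ hcommL B le_ hndB hle.1
      (fun x => by rw [hmemB, hle.2.1 x]; rfl) hpwB hpwle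
  have e4 : ∀ h : P → ℝ, tfold (otog C) (B.reverse) h = tfold (otog C) (le_.reverse) h :=
    tfold_linext _ _ hcommR B.reverse le_.reverse (by simpa using hndB)
      (by simpa using hle.1)
      (fun x => by simp only [List.mem_reverse]; rw [hmemB, hle.2.1 x]; rfl) hpwBrev hpwlerev
  -- commuting otog v past N
  have hvN : ∀ w ∈ N, ∀ h : P → ℝ, otog C v (otog C w h) = otog C w (otog C v h) := by
    intro w hw h
    obtain ⟨hwr, hwv⟩ := (hmemN w).1 hw
    have h1 : ¬ v ⋖ w := fun hc => by have := hrk.2.1 v w hc; omega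
    have h2 : ¬ w ⋖ v := fun hc => hwv hc.lt
    have hne : v ≠ w := fun hh => by rw [hh] at hv; omega
    exact otog_comm h1 h2 hne h
  -- the computation
  have hLHS : tauStarApp C v le_ f
      = tfold (otog C) le_.reverse (otog C v (tfold (otog C) le_ f)) := by
    show le_.foldr (fun w h => otog C w h) (otog C v (tfold (otog C) le_ f)) = _
    exact tfold_foldr (otog C) le_ _
  rw [hLHS, e2, e1, List.reverse_append, tfold_append, tfold_append,
    show otog C v (tfold (otog C) N (tfold (otog C) B f))
        = tfold (otog C) N (otog C v (tfold (otog C) B f)) from (tfold_comm _ v N hvN _).symm,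
    tfold_cancel_rev (otog C) (otog_pos' hC) (fun x h hh => otog_otog hC x hh) N _
      (otog_pos hC v (hposO B f hf)),
    e4, e3]

lemma part3 (hC : 0 < C) (hrk : IsRankFunction rk r) (v : P) (i : ℕ) (hv : rk v = i)
    (rl : ℕ → List P) (hrl : ∀ j, (rl j).Nodup ∧ ∀ x : P, x ∈ rl j ↔ rk x = j)
    (le_ : List P) (hle : IsLinearExtensionOn {x : P | x < v} le_)
    (f : P → ℝ) (hf : ∀ x, 0 < f x) :
    tauStarApp C v le_ f
      = (List.range i).reverse.foldl (fun h j => applyOTogs C (rl j) h)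
          (otog C v ((List.range i).foldl (fun h j => applyOTogs C (rl j) h) f)) := by
  rw [foldl_ranks_eq C rl (List.range i) f, foldl_ranks_eq C rl (List.range i).reverse]
  exact part3' hC hrk v i hv rl hrl le_ hle f hf

/-- cancellation `G ∘ F = id` and `F ∘ G = id` for the up/down rank sweeps -/
lemma sweep_cancel (hC : 0 < C) (hrk : IsRankFunction rk r) (i : ℕ)
    (rl : ℕ → List P) (hrl : ∀ j, (rl j).Nodup ∧ ∀ x : P, x ∈ rl j ↔ rk x = j) :
    ∀ h : P → ℝ, (∀ y, 0 < h y) →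
      tfold (otog C) (((List.range i).map rl).flatten)
        (tfold (otog C) ((((List.range i).reverse).map rl).flatten) h) = h := by
  intro h hh
  classical
  set A : List P := ((List.range i).map rl).flatten with hA
  set A' : List P := (((List.range i).reverse).map rl).flatten with hA'
  have hrkmem : ∀ j, ∀ x ∈ rl j, rk x = j := fun j x hx => ((hrl j).2 x).1 hx
  have hQL : ∀ {a b : P}, rk a ≤ rk b → ¬ b < a := by
    intro a b hr hlt
    have := rk_lt_of_lt hrk hlt
    omega
  have hmemA : ∀ x, x ∈ A ↔ rk x < i := by
    intro x
    rw [hA, mem_flatten_blocks]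
    constructor
    · rintro ⟨j, hj, hx⟩
      rw [hrkmem j x hx]
      simpa using hj
    · intro hx
      exact ⟨rk x, by simpa using hx, ((hrl (rk x)).2 x).2 rfl⟩
  have hmemA' : ∀ x, x ∈ A' ↔ rk x < i := by
    intro x
    rw [hA', mem_flatten_blocks]
    constructor
    · rintro ⟨j, hj, hx⟩
      rw [hrkmem j x hx]
      simpa using hj
    · intro hx
      exact ⟨rk x, by simpa using hx, ((hrl (rk x)).2 x).2 rfl⟩
  have hndA : A.Nodup := nodup_flatten_blocks List.nodup_range
    (fun j => (hrl j).1) hrkmem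
  have hndA' : A'.Nodup := nodup_flatten_blocks (by simp [List.nodup_range])
    (fun j => (hrl j).1) hrkmem
  have hpwA : A.Pairwise (fun a b => ¬ b < a) := by
    refine pairwise_flatten_blocks (fun j => ?_) (fun j k hjk a ha b hb => ?_)
      (pairwise_range_lt i)
    · exact pairwise_of_nodup_of_ne
        (fun a ha b hb hab => hQL (le_of_eq ((hrkmem j a ha).trans (hrkmem j b hb).symm)))
        ((hrl j).1)
    · exact hQL (by rw [hrkmem j a ha, hrkmem k b hb]; omega)
  have hpwA' : A'.Pairwise (fun a b => ¬ a < b) := by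
    refine pairwise_flatten_blocks (fun j => ?_) (fun j k hjk a ha b hb => ?_)
      (List.pairwise_reverse.mpr (pairwise_range_lt i))
    · exact pairwise_of_nodup_of_ne
        (fun a ha b hb hab => hQL (le_of_eq ((hrkmem j b hb).trans (hrkmem j a ha).symm)))
        ((hrl j).1)
    · exact hQL (by rw [hrkmem j a ha, hrkmem k b hb]; omega)
  have hpwArev : (A.reverse).Pairwise (fun a b => ¬ a < b) :=
    List.pairwise_reverse.mpr hpwA
  have hcommR : ∀ a b : P, ¬ a < b → ¬ b < a → ∀ h : P → ℝ,
      otog C a (otog C b h) = otog C b (otog C a h) :=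
    fun a b h1 h2 h => otog_comm_of_Q C h2 h1 h
  have e : ∀ h : P → ℝ, tfold (otog C) A' h = tfold (otog C) (A.reverse) h :=
    tfold_linext _ _ hcommR A' A.reverse hndA' (by simpa using hndA)
      (fun x => by rw [hmemA']; simp only [List.mem_reverse]; rw [hmemA]) hpwA' hpwArev
  rw [e]
  have := tfold_cancel_rev (otog C) (otog_pos' hC) (fun x g hg => otog_otog hC x hg)
    A.reverse h hh
  rwa [List.reverse_reverse] at this

lemma sweep_cancel' (hC : 0 < C) (hrk : IsRankFunction rk r) (i : ℕ)
    (rl : ℕ → List P) (hrl : ∀ j, (rl j).Nodup ∧ ∀ x : P, x ∈ rl j ↔ rk x = j) :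
    ∀ h : P → ℝ, (∀ y, 0 < h y) →
      tfold (otog C) ((((List.range i).reverse).map rl).flatten)
        (tfold (otog C) (((List.range i).map rl).flatten) h) = h := by
  intro h hh
  classical
  set A : List P := ((List.range i).map rl).flatten with hA
  set A' : List P := (((List.range i).reverse).map rl).flatten with hA'
  have hrkmem : ∀ j, ∀ x ∈ rl j, rk x = j := fun j x hx => ((hrl j).2 x).1 hx
  have hQL : ∀ {a b : P}, rk a ≤ rk b → ¬ b < a := by
    intro a b hr hlt
    have := rk_lt_of_lt hrk hlt
    omega
  have hmemA : ∀ x, x ∈ A ↔ rk x < i := by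
    intro x
    rw [hA, mem_flatten_blocks]
    constructor
    · rintro ⟨j, hj, hx⟩
      rw [hrkmem j x hx]
      simpa using hj
    · intro hx
      exact ⟨rk x, by simpa using hx, ((hrl (rk x)).2 x).2 rfl⟩
  have hmemA' : ∀ x, x ∈ A' ↔ rk x < i := by
    intro x
    rw [hA', mem_flatten_blocks]
    constructor
    · rintro ⟨j, hj, hx⟩
      rw [hrkmem j x hx]
      simpa using hj
    · intro hx
      exact ⟨rk x, by simpa using hx, ((hrl (rk x)).2 x).2 rfl⟩
  have hndA : A.Nodup := nodup_flatten_blocks List.nodup_range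
    (fun j => (hrl j).1) hrkmem
  have hndA' : A'.Nodup := nodup_flatten_blocks (by simp [List.nodup_range])
    (fun j => (hrl j).1) hrkmem
  have hpwA : A.Pairwise (fun a b => ¬ b < a) := by
    refine pairwise_flatten_blocks (fun j => ?_) (fun j k hjk a ha b hb => ?_)
      (pairwise_range_lt i)
    · exact pairwise_of_nodup_of_ne
        (fun a ha b hb hab => hQL (le_of_eq ((hrkmem j a ha).trans (hrkmem j b hb).symm)))
        ((hrl j).1)
    · exact hQL (by rw [hrkmem j a ha, hrkmem k b hb]; omega)
  have hpwA' : A'.Pairwise (fun a b => ¬ a < b) := by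
    refine pairwise_flatten_blocks (fun j => ?_) (fun j k hjk a ha b hb => ?_)
      (List.pairwise_reverse.mpr (pairwise_range_lt i))
    · exact pairwise_of_nodup_of_ne
        (fun a ha b hb hab => hQL (le_of_eq ((hrkmem j b hb).trans (hrkmem j a ha).symm)))
        ((hrl j).1)
    · exact hQL (by rw [hrkmem j a ha, hrkmem k b hb]; omega)
  have hpwArev : (A.reverse).Pairwise (fun a b => ¬ a < b) :=
    List.pairwise_reverse.mpr hpwA
  have hcommR : ∀ a b : P, ¬ a < b → ¬ b < a → ∀ h : P → ℝ,
      otog C a (otog C b h) = otog C b (otog C a h) :=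
    fun a b h1 h2 h => otog_comm_of_Q C h2 h1 h
  have e : ∀ h : P → ℝ, tfold (otog C) A' h = tfold (otog C) (A.reverse) h :=
    tfold_linext _ _ hcommR A' A.reverse hndA' (by simpa using hndA)
      (fun x => by rw [hmemA']; simp only [List.mem_reverse]; rw [hmemA]) hpwA' hpwArev
  rw [e]
  exact tfold_cancel_rev (otog C) (otog_pos' hC) (fun x g hg => otog_otog hC x hg) A h hh

lemma part4 (hC : 0 < C) (hrk : IsRankFunction rk r) (i : ℕ)
    (rl : ℕ → List P) (hrl : ∀ j, (rl j).Nodup ∧ ∀ x : P, x ∈ rl j ↔ rk x = j)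
    (lef : P → List P) (hlef : ∀ w : P, IsLinearExtensionOn {x : P | x < w} (lef w)) :
    ∀ (l : List P), (∀ w ∈ l, rk w = i) → ∀ (f : P → ℝ), (∀ x, 0 < f x) →
      l.foldl (fun h w => tauStarApp C w (lef w) h) f
        = tfold (otog C) ((((List.range i).reverse).map rl).flatten)
            (tfold (otog C) l
              (tfold (otog C) (((List.range i).map rl).flatten) f)) := by
  have hposO : ∀ (l : List P) (h : P → ℝ), (∀ y, 0 < h y) → ∀ y, 0 < tfold (otog C) l h y :=
    fun l h hh => tfold_pos _ (otog_pos' hC) l h hh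
  intro l
  induction l with
  | nil =>
    intro _ f hf
    rw [List.foldl_nil, tfold_nil]
    exact (sweep_cancel' hC hrk i rl hrl f hf).symm
  | cons w tl ih =>
    intro hl f hf
    have hw : rk w = i := hl w (List.mem_cons_self ..)
    have htl : ∀ x ∈ tl, rk x = i := fun x hx => hl x (List.mem_cons_of_mem _ hx)
    have hstep : tauStarApp C w (lef w) f
        = tfold (otog C) ((((List.range i).reverse).map rl).flatten)
            (otog C w (tfold (otog C) (((List.range i).map rl).flatten) f)) :=
      part3' hC hrk w i hw rl hrl (lef w) (hlef w) f hf
    have hpos1 : ∀ y, 0 < tauStarApp C w (lef w) f y := by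
      rw [hstep]
      exact hposO _ _ (otog_pos hC w (hposO _ f hf))
    rw [List.foldl_cons, ih htl _ hpos1, hstep,
      sweep_cancel hC hrk i rl hrl _ (otog_pos hC w (hposO _ f hf))]
    rfl

end Parts34

/-- Let `P` be a finite graded poset of rank `r` and `v ∈ P` with
`rk v = i`.  Writing `ρT_j`/`ρτ_j` for the (commuting) products of order/antichain
toggles of rank `j` (realized along a list `rl j` of the rank-`j` elements), and
interpreting `ρτ_{-1}` as the identity, we have, as maps on positive labelings:
(1) `T_v* = ρτ_{i-1} ∘ τ_v ∘ ρτ_{i-1}`;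
(2) `ρT_i* = ρτ_{i-1} ∘ ρτ_i ∘ ρτ_{i-1}`;
(3) `τ_v* = ρT_0 ∘ ρT_1 ∘ ⋯ ∘ ρT_{i-1} ∘ T_v ∘ ρT_{i-1} ∘ ⋯ ∘ ρT_1 ∘ ρT_0`;
(4) `ρτ_i* = ρT_0 ∘ ρT_1 ∘ ⋯ ∘ ρT_{i-1} ∘ ρT_i ∘ ρT_{i-1} ∘ ⋯ ∘ ρT_1 ∘ ρT_0`,
where `ρT_i* = ∏_{rk x = i} T_x*` and `ρτ_i* = ∏_{rk x = i} τ_x*`. -/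
theorem rank_toggle_identities (C : ℝ) (hC : 0 < C)
    (rk : P → ℕ) (r : ℕ) (hrk : IsRankFunction rk r)
    (v : P) (i : ℕ) (hv : rk v = i)
    (rl : ℕ → List P) (hrl : ∀ j, (rl j).Nodup ∧ ∀ x : P, x ∈ rl j ↔ rk x = j)
    (lcf : P → List P) (hlcf : ∀ w : P, (lcf w).Nodup ∧ ∀ y : P, y ∈ lcf w ↔ y ⋖ w)
    (lef : P → List P) (hlef : ∀ w : P, IsLinearExtensionOn {x : P | x < w} (lef w)) :
    -- (1) `T_v* = ρτ_{i-1} ∘ τ_v ∘ ρτ_{i-1}`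
    (∀ g : P → ℝ, (∀ x, 0 < g x) →
      TstarApp C v (lcf v) g
        = applyATogs C (if i = 0 then [] else rl (i - 1))
            (atog C v (applyATogs C (if i = 0 then [] else rl (i - 1)) g)))
    ∧
    -- (2) `ρT_i* = ρτ_{i-1} ∘ ρτ_i ∘ ρτ_{i-1}`
    (∀ g : P → ℝ, (∀ x, 0 < g x) →
      (rl i).foldl (fun h w => TstarApp C w (lcf w) h) g
        = applyATogs C (if i = 0 then [] else rl (i - 1))
            (applyATogs C (rl i)
              (applyATogs C (if i = 0 then [] else rl (i - 1)) g)))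
    ∧
    -- (3) `τ_v* = ρT_0 ∘ ⋯ ∘ ρT_{i-1} ∘ T_v ∘ ρT_{i-1} ∘ ⋯ ∘ ρT_0`
    (∀ f : P → ℝ, (∀ x, 0 < f x) →
      tauStarApp C v (lef v) f
        = (List.range i).reverse.foldl (fun h j => applyOTogs C (rl j) h)
            (otog C v ((List.range i).foldl (fun h j => applyOTogs C (rl j) h) f)))
    ∧
    -- (4) `ρτ_i* = ρT_0 ∘ ⋯ ∘ ρT_{i-1} ∘ ρT_i ∘ ρT_{i-1} ∘ ⋯ ∘ ρT_0`
    (∀ f : P → ℝ, (∀ x, 0 < f x) →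
      (rl i).foldl (fun h w => tauStarApp C w (lef w) h) f
        = (List.range i).reverse.foldl (fun h j => applyOTogs C (rl j) h)
            (applyOTogs C (rl i)
              ((List.range i).foldl (fun h j => applyOTogs C (rl j) h) f))) := by
  constructor
  · intro g hg
    exact part1 hC hrk v i hv rl hrl (lcf v) (hlcf v) g hg
  constructor
  · intro g hg
    exact part2 hC hrk i rl hrl lcf hlcf (rl i) (fun w hw => ((hrl i).2 w).1 hw) g hg
  constructor
  · intro f hf
    exact part3 hC hrk v i hv rl hrl (lef v) (hlef v) f hf
  · intro f hf
    rw [foldl_ranks_eq C rl (List.range i), foldl_ranks_eq C rl (List.range i).reverse]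
    exact part4 hC hrk i rl hrl lef hlef (rl i) (fun w hw => ((hrl i).2 w).1 hw) f hf
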